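/- Let h, s be positive integers. Assume that for every finite subset T ⊆ R with |T| ≤ h − 1 the family (ι_R(v))_{v∈T} is linearly independent over F, and for every finite subset T ⊆ L with |T| ≤ s − 1 the family (ι_L(u))_{u∈T} is linearly independent over F. Let W ⊆ L × R be a finite set and let c : W → F satisfy c(e) ≠ 0 for every e ∈ W and Σ_{e∈W} c(e)·w_e = 0. Then every u ∈ L that occurs as the first coordinate of some pair in W satisfies |{v ∈ R : (u,v) ∈ W}| ≥ h, and every v ∈ R that occurs as the second coordinate of some pair in W satisfies |{u ∈ L : (u,v) ∈ W}| ≥ s. -/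
import Mathlib

/-- The edge vector `w_e` for `e = (u, v)`: its block indexed by the left vertex `u`
equals `ιR v`, its block indexed by the right vertex `v` equals `ιL u`,
and all other blocks are zero. -/
def wvec {F L R B : Type*} [Zero F] [DecidableEq L] [DecidableEq R]
    (ιL : L → B → F) (ιR : R → B → F) (e : L × R) : (L ⊕ R) × B → F :=
  fun x =>
    match x with
    | (Sum.inl u', b) => if u' = e.1 then ιR e.2 b else 0
    | (Sum.inr v', b) => if v' = e.2 then ιL e.1 b else 0

theorem stmt3 {F L R B : Type*} [Field F] [DecidableEq L] [DecidableEq R]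
    (ιL : L → B → F) (ιR : R → B → F)
    (h s : ℕ) (hh : 0 < h) (hs : 0 < s)
    (hindR : ∀ T : Finset R, T.card ≤ h - 1 →
      LinearIndependent F (fun v : T => ιR v))
    (hindL : ∀ T : Finset L, T.card ≤ s - 1 →
      LinearIndependent F (fun u : T => ιL u))
    (W : Finset (L × R)) (c : L × R → F)
    (hc : ∀ e ∈ W, c e ≠ 0)
    (hsum : ∑ e ∈ W, c e • wvec ιL ιR e = 0) :
    (∀ u : L, (∃ v, (u, v) ∈ W) → h ≤ (W.filter fun e => e.1 = u).card) ∧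
    (∀ v : R, (∃ u, (u, v) ∈ W) → s ≤ (W.filter fun e => e.2 = v).card) := by
  constructor
  · intro u ⟨v0, hv0⟩
    by_contra hlt
    push_neg at hlt
    set S := W.filter fun e => e.1 = u with hS
    have hScard : S.card ≤ h - 1 := Nat.le_pred_of_lt hlt
    set T := S.image Prod.snd with hT
    have hTcard : T.card ≤ h - 1 := le_trans (Finset.card_image_le) hScard
    have hmemS : ∀ e ∈ S, e = (u, e.2) := by
      intro e he
      simp only [hS, Finset.mem_filter] at he
      ext <;> simp [he.2]
    -- block sum at (inl u, b)
    have hblock : ∀ b : B, ∑ e ∈ S, c e * ιR e.2 b = 0 := by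
      intro b
      have := congrFun hsum (Sum.inl u, b)
      simp only [Finset.sum_apply, Pi.smul_apply, Pi.zero_apply, wvec, smul_eq_mul] at this
      rw [← this, hS, Finset.sum_filter]
      apply Finset.sum_congr rfl
      intro e _
      by_cases he : e.1 = u
      · simp [he]
      · rw [if_neg (mt Eq.symm he)]; simp [he]
    have hsum2 : ∀ b : B, ∑ v ∈ T, c (u, v) * ιR v b = 0 := by
      intro b
      rw [hT, Finset.sum_image, ← hblock b]
      · apply Finset.sum_congr rfl
        intro e he
        rw [hmemS e he]
      · intro x hx y hy hxy
        rw [hmemS x hx, hmemS y hy, hxy]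
    have hli := hindR T hTcard
    rw [Fintype.linearIndependent_iff] at hli
    have hv0S : (u, v0) ∈ S := by simp [hS, hv0]
    have hv0T : v0 ∈ T := Finset.mem_image_of_mem _ hv0S
    have := hli (fun v => c (u, v)) ?_ ⟨v0, hv0T⟩
    · exact hc (u, v0) hv0 this
    · funext b
      simpa [Finset.sum_apply, ← Finset.sum_attach T (fun v => c (u, v) * ιR v b)]
        using hsum2 b
  · intro v ⟨u0, hu0⟩
    by_contra hlt
    push_neg at hlt
    set S := W.filter fun e => e.2 = v with hS
    have hScard : S.card ≤ s - 1 := Nat.le_pred_of_lt hlt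
    set T := S.image Prod.fst with hT
    have hTcard : T.card ≤ s - 1 := le_trans (Finset.card_image_le) hScard
    have hmemS : ∀ e ∈ S, e = (e.1, v) := by
      intro e he
      simp only [hS, Finset.mem_filter] at he
      ext <;> simp [he.2]
    have hblock : ∀ b : B, ∑ e ∈ S, c e * ιL e.1 b = 0 := by
      intro b
      have := congrFun hsum (Sum.inr v, b)
      simp only [Finset.sum_apply, Pi.smul_apply, Pi.zero_apply, wvec, smul_eq_mul] at this
      rw [← this, hS, Finset.sum_filter]
      apply Finset.sum_congr rfl
      intro e _
      by_cases he : e.2 = v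
      · simp [he]
      · rw [if_neg (mt Eq.symm he)]; simp [he]
    have hsum2 : ∀ b : B, ∑ u ∈ T, c (u, v) * ιL u b = 0 := by
      intro b
      rw [hT, Finset.sum_image, ← hblock b]
      · apply Finset.sum_congr rfl
        intro e he
        rw [hmemS e he]
      · intro x hx y hy hxy
        rw [hmemS x hx, hmemS y hy, hxy]
    have hli := hindL T hTcard
    rw [Fintype.linearIndependent_iff] at hli
    have hu0S : (u0, v) ∈ S := by simp [hS, hu0]
    have hu0T : u0 ∈ T := Finset.mem_image_of_mem _ hu0S
    have := hli (fun u => c (u, v)) ?_ ⟨u0, hu0T⟩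
    · exact hc (u0, v) hu0 this
    · funext b
      simpa [Finset.sum_apply, ← Finset.sum_attach T (fun u => c (u, v) * ιL u b)]
        using hsum2 b
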